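/- Let T̄, C̄ ⊆ S̄. Let V : S → ℝ be a bounded measurable function with 0 ≤ V ≤ 1 satisfying the Bellman equations for discounted constrained reachability: V(s) = 1 if φ(s) ∈ T̄; V(s) = 0 if φ(s) ∉ T̄ and φ(s) ∉ C̄; and V(s) = γ ∫ V(s') P(ds'|s) if φ(s) ∈ C̄ and φ(s) ∉ T̄. Let V̄ : S̄ → ℝ with 0 ≤ V̄ ≤ 1 satisfy the analogous equations: V̄(x̄) = 1 for x̄ ∈ T̄; V̄(x̄) = 0 for x̄ ∉ T̄ ∪ C̄; and V̄(x̄) = γ Σ_{ȳ∈S̄} P̄(x̄)(ȳ) V̄(ȳ) for x̄ ∈ C̄ \ T̄. Then ∫ |V(s) − V̄(φ(s))| dξ(s) ≤ γ L_P/(1−γ). -/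

import Mathlib

open MeasureTheory ProbabilityTheory

set_option linter.unusedSectionVars false
set_option maxHeartbeats 1000000

noncomputable def tvDist {X : Type*} [MeasurableSpace X] (μ ν : Measure X) : ℝ :=
  ⨆ A : {A : Set X // MeasurableSet A}, |(μ A.1).toReal - (ν A.1).toReal|

section Helpers

variable {X : Type*} [Fintype X] [MeasurableSpace X] [DiscreteMeasurableSpace X]


variable {X : Type*} [Fintype X] [MeasurableSpace X] [DiscreteMeasurableSpace X]

lemma meas_finset_eq_sum (μ : Measure X) (s : Finset X) : μ ↑s = ∑ y ∈ s, μ {y} := by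
  have h := MeasureTheory.sum_measure_preimage_singleton (μ := μ) s (f := id)
    (fun y _ => (MeasurableSet.of_discrete))
  simpa using h.symm

lemma bddAbove_tv (μ ν : Measure X) :
    BddAbove (Set.range fun A : {A : Set X // MeasurableSet A} =>
      |(μ A.1).toReal - (ν A.1).toReal|) :=
  Set.Finite.bddAbove (Set.finite_range _)

lemma abs_le_tvDist (μ ν : Measure X) (A : Set X) (hA : MeasurableSet A) :
    |(μ A).toReal - (ν A).toReal| ≤ tvDist μ ν :=
  le_ciSup (bddAbove_tv μ ν) ⟨A, hA⟩

lemma tvDist_nonneg (μ ν : Measure X) : 0 ≤ tvDist μ ν :=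
  le_trans (abs_nonneg _) (abs_le_tvDist μ ν ∅ MeasurableSet.empty)

lemma tvDist_comm (μ ν : Measure X) : tvDist μ ν = tvDist ν μ := by
  unfold tvDist
  congr 1
  ext A
  rw [abs_sub_comm]

lemma toReal_prob_le_one (μ : Measure X) [IsProbabilityMeasure μ] (A : Set X) :
    (μ A).toReal ≤ 1 := by
  have h := measure_mono (Set.subset_univ A) (μ := μ)
  have := ENNReal.toReal_mono (by simp) h
  simpa using this

lemma tvDist_le_one (μ ν : Measure X) [IsProbabilityMeasure μ] [IsProbabilityMeasure ν] :
    tvDist μ ν ≤ 1 := by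
  apply ciSup_le
  intro A
  rw [abs_le]
  constructor
  · have := toReal_prob_le_one ν A.1
    have h0 : 0 ≤ (μ A.1).toReal := ENNReal.toReal_nonneg
    linarith
  · have := toReal_prob_le_one μ A.1
    have h0 : 0 ≤ (ν A.1).toReal := ENNReal.toReal_nonneg
    linarith

lemma sum_mul_le_tvDist (μ ν : Measure X) [IsFiniteMeasure μ] [IsFiniteMeasure ν]
    (g : X → ℝ) (hg0 : ∀ y, 0 ≤ g y) (hg1 : ∀ y, g y ≤ 1) :
    ∑ y, ((μ {y}).toReal - (ν {y}).toReal) * g y ≤ tvDist μ ν := by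
  classical
  set a : X → ℝ := fun y => (μ {y}).toReal with ha
  set b : X → ℝ := fun y => (ν {y}).toReal with hb
  set A : Finset X := Finset.univ.filter fun y => b y ≤ a y with hAdef
  have h1 : ∑ y, (a y - b y) * g y ≤ ∑ y ∈ A, (a y - b y) := by
    rw [← Finset.sum_filter_add_sum_filter_not Finset.univ (fun y => b y ≤ a y)
      (fun y => (a y - b y) * g y)]
    have h2 : ∑ y ∈ Finset.univ.filter (fun y => ¬ b y ≤ a y), (a y - b y) * g y ≤ 0 := by
      apply Finset.sum_nonpos
      intro y hy
      simp only [Finset.mem_filter] at hy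
      have : a y - b y ≤ 0 := by push_neg at hy; linarith [hy.2]
      exact mul_nonpos_of_nonpos_of_nonneg this (hg0 y)
    have h3 : ∑ y ∈ A, (a y - b y) * g y ≤ ∑ y ∈ A, (a y - b y) := by
      apply Finset.sum_le_sum
      intro y hy
      simp only [hAdef, Finset.mem_filter] at hy
      have hab : 0 ≤ a y - b y := by linarith [hy.2]
      nlinarith [hg1 y, hg0 y]
    linarith
  have hA : ∑ y ∈ A, (a y - b y) = (μ ↑A).toReal - (ν ↑A).toReal := by
    rw [meas_finset_eq_sum, meas_finset_eq_sum, Finset.sum_sub_distrib,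
      ENNReal.toReal_sum (fun y _ => measure_ne_top μ _),
      ENNReal.toReal_sum (fun y _ => measure_ne_top ν _)]
  calc ∑ y, (a y - b y) * g y ≤ (μ ↑A).toReal - (ν ↑A).toReal := by rw [← hA]; exact h1
    _ ≤ |(μ ↑A).toReal - (ν ↑A).toReal| := le_abs_self _
    _ ≤ tvDist μ ν := abs_le_tvDist μ ν _ MeasurableSet.of_discrete

lemma abs_sum_mul_le_tvDist (μ ν : Measure X) [IsFiniteMeasure μ] [IsFiniteMeasure ν]
    (g : X → ℝ) (hg0 : ∀ y, 0 ≤ g y) (hg1 : ∀ y, g y ≤ 1) :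
    |∑ y, ((μ {y}).toReal - (ν {y}).toReal) * g y| ≤ tvDist μ ν := by
  rw [abs_le]
  constructor
  · have h := sum_mul_le_tvDist ν μ g hg0 hg1
    rw [tvDist_comm] at h
    have : -∑ y, ((μ {y}).toReal - (ν {y}).toReal) * g y
        = ∑ y, ((ν {y}).toReal - (μ {y}).toReal) * g y := by
      rw [← Finset.sum_neg_distrib]
      congr 1; ext y; ring
    linarith [h, this.le, this.ge]
  · exact sum_mul_le_tvDist μ ν g hg0 hg1

end Helpers

lemma integrable_of_abs_le_one {X : Type*} [MeasurableSpace X] (μ : Measure X) [IsFiniteMeasure μ]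
    {f : X → ℝ} (hm : AEStronglyMeasurable f μ) (h1 : ∀ x, |f x| ≤ 1) : Integrable f μ :=
  (integrable_const 1).mono' hm (Filter.Eventually.of_forall (by simpa [Real.norm_eq_abs] using h1))

/-- Value-difference bound for discounted constrained reachability (`C U T`): the expected
(under the stationary distribution `ξ`) absolute difference between the ground value function
`V` and the latent value function `Vb` composed with the embedding `φ` is at most
`γ·L_P/(1-γ)`, where `L_P` is the local transition loss. -/
theorem value_difference_constrained_reachability
    {S : Type*} [MeasurableSpace S]
    {Sb : Type*} [Fintype Sb] [Nonempty Sb] [MeasurableSpace Sb] [DiscreteMeasurableSpace Sb]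
    (P : Kernel S S) [IsMarkovKernel P]
    (Pb : Sb → PMF Sb)
    (φ : S → Sb) (hφ : Measurable φ)
    (ξ : Measure S) [IsProbabilityMeasure ξ]
    (hinv : ∀ A : Set S, MeasurableSet A → ξ A = ∫⁻ s, P s A ∂ξ)
    (γ : ℝ) (hγ0 : 0 ≤ γ) (hγ1 : γ < 1)
    (Tb Cb : Set Sb)
    (V : S → ℝ) (hVmeas : Measurable V)
    (hV0 : ∀ s, 0 ≤ V s) (hV1 : ∀ s, V s ≤ 1)
    (hVtarget : ∀ s, φ s ∈ Tb → V s = 1)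
    (hVavoid : ∀ s, φ s ∉ Tb → φ s ∉ Cb → V s = 0)
    (hVbellman : ∀ s, φ s ∈ Cb → φ s ∉ Tb → V s = γ * ∫ s', V s' ∂(P s))
    (Vb : Sb → ℝ) (hVb0 : ∀ x, 0 ≤ Vb x) (hVb1 : ∀ x, Vb x ≤ 1)
    (hVbtarget : ∀ x ∈ Tb, Vb x = 1)
    (hVbavoid : ∀ x, x ∉ Tb ∪ Cb → Vb x = 0)
    (hVbbellman : ∀ x ∈ Cb \ Tb, Vb x = γ * ∑ y, ((Pb x) y).toReal * Vb y) :
    ∫ s, |V s - Vb (φ s)| ∂ξ ≤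
      γ * (∫ s, tvDist ((P s).map φ) ((Pb (φ s)).toMeasure) ∂ξ) / (1 - γ) := by
  classical
  set f : S → ℝ := fun s => |V s - Vb (φ s)| with hf
  have hVbmeas : Measurable Vb := Measurable.of_discrete
  have hfmeas : Measurable f := (hVmeas.sub (hVbmeas.comp hφ)).abs
  have hf0 : ∀ s, 0 ≤ f s := fun s => abs_nonneg _
  have hf1 : ∀ s, f s ≤ 1 := by
    intro s
    rw [hf, abs_le]
    constructor <;> [skip; skip] <;>
      · have := hV0 s; have := hV1 s; have := hVb0 (φ s); have := hVb1 (φ s); linarith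
  set L : S → ℝ := fun s => tvDist ((P s).map φ) ((Pb (φ s)).toMeasure) with hLdef
  have hmapprob : ∀ s : S, IsProbabilityMeasure ((P s).map φ) := fun s =>
    Measure.isProbabilityMeasure_map hφ.aemeasurable
  have hL0 : ∀ s, 0 ≤ L s := fun s => tvDist_nonneg _ _
  have hL1 : ∀ s, L s ≤ 1 := fun s => by
    have := hmapprob s
    exact tvDist_le_one _ _
  have hLmeas : Measurable L := by
    apply Measurable.iSup
    intro A
    have h1 : Measurable fun s => (((P s).map φ) A.1).toReal := by
      simp_rw [Measure.map_apply hφ A.2]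
      exact (P.measurable_coe (hφ A.2)).ennreal_toReal
    have h2 : Measurable fun s => (((Pb (φ s)).toMeasure) A.1).toReal :=
      (Measurable.of_discrete (f := fun x : Sb => ((Pb x).toMeasure A.1).toReal)).comp hφ
    exact (h1.sub h2).abs
  -- pointwise bound
  have hpoint : ∀ s, f s ≤ γ * ∫ x, f x ∂(P s) + γ * L s := by
    intro s
    have hint_nonneg : 0 ≤ ∫ x, f x ∂(P s) := integral_nonneg hf0
    by_cases hT : φ s ∈ Tb
    · have : f s = 0 := by
        rw [hf]; simp [hVtarget s hT, hVbtarget (φ s) hT]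
      rw [this]
      have := hL0 s
      positivity
    by_cases hC : φ s ∈ Cb
    · -- Bellman case
      have hμprob := hmapprob s
      have hintV : Integrable V (P s) :=
        integrable_of_abs_le_one _ hVmeas.aestronglyMeasurable
          (fun x => abs_le.mpr ⟨by linarith [hV0 x], hV1 x⟩)
      have hintVb : Integrable (fun x => Vb (φ x)) (P s) :=
        integrable_of_abs_le_one _ ((hVbmeas.comp hφ).aestronglyMeasurable)
          (fun x => abs_le.mpr ⟨by linarith [hVb0 (φ x)], hVb1 (φ x)⟩)
      have hI2 : ∫ x, Vb (φ x) ∂(P s) = ∑ y, (((P s).map φ) {y}).toReal * Vb y := by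
        rw [← integral_map hφ.aemeasurable hVbmeas.aestronglyMeasurable]
        rw [integral_fintype (integrable_of_abs_le_one _ hVbmeas.aestronglyMeasurable
          (fun x => abs_le.mpr ⟨by linarith [hVb0 x], hVb1 x⟩))]
        simp [smul_eq_mul, Measure.real]
      have h1 : |∫ x, V x ∂(P s) - ∫ x, Vb (φ x) ∂(P s)| ≤ ∫ x, f x ∂(P s) := by
        rw [← integral_sub hintV hintVb]
        calc |∫ x, (V x - Vb (φ x)) ∂(P s)| = ‖∫ x, (V x - Vb (φ x)) ∂(P s)‖ :=
            (Real.norm_eq_abs _).symm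
          _ ≤ ∫ x, ‖V x - Vb (φ x)‖ ∂(P s) := norm_integral_le_integral_norm _
          _ = ∫ x, f x ∂(P s) := by simp [hf, Real.norm_eq_abs]
      have h2 : |∫ x, Vb (φ x) ∂(P s) - ∑ y, ((Pb (φ s)) y).toReal * Vb y| ≤ L s := by
        rw [hI2]
        have hsum : ∑ y, (((P s).map φ) {y}).toReal * Vb y
            - ∑ y, ((Pb (φ s)) y).toReal * Vb y
            = ∑ y, ((((P s).map φ) {y}).toReal - (((Pb (φ s)).toMeasure) {y}).toReal) * Vb y := by
          rw [← Finset.sum_sub_distrib]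
          congr 1; ext y
          rw [PMF.toMeasure_apply_singleton _ _ (MeasurableSet.of_discrete)]
          ring
        rw [hsum]
        exact abs_sum_mul_le_tvDist _ _ Vb hVb0 hVb1
      have hVs := hVbellman s hC hT
      have hVbs := hVbbellman (φ s) ⟨hC, hT⟩
      have : f s = γ * |∫ x, V x ∂(P s) - ∑ y, ((Pb (φ s)) y).toReal * Vb y| := by
        show |V s - Vb (φ s)| = _
        rw [hVs, hVbs, ← mul_sub, abs_mul, abs_of_nonneg hγ0]
      rw [this]
      have htriangle : |∫ x, V x ∂(P s) - ∑ y, ((Pb (φ s)) y).toReal * Vb y|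
          ≤ ∫ x, f x ∂(P s) + L s := by
        calc |∫ x, V x ∂(P s) - ∑ y, ((Pb (φ s)) y).toReal * Vb y|
            ≤ |∫ x, V x ∂(P s) - ∫ x, Vb (φ x) ∂(P s)|
              + |∫ x, Vb (φ x) ∂(P s) - ∑ y, ((Pb (φ s)) y).toReal * Vb y| := abs_sub_le _ _ _
          _ ≤ ∫ x, f x ∂(P s) + L s := add_le_add h1 h2
      nlinarith
    · have : f s = 0 := by
        rw [hf]; simp [hVavoid s hT hC, hVbavoid (φ s) (by simp [hT, hC])]
      rw [this]
      have := hL0 s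
      positivity
  -- lintegral machinery
  set F : S → ENNReal := fun x => ENNReal.ofReal (f x) with hFdef
  have hFmeas : Measurable F := hfmeas.ennreal_ofReal
  have hbind : ξ.bind (fun s => (P s : Measure S)) = ξ := by
    ext A hA
    rw [Measure.bind_apply hA (P.measurable.aemeasurable)]
    exact (hinv A hA).symm
  have hlint_le_one : ∀ (μ : Measure S), IsProbabilityMeasure μ → ∫⁻ x, F x ∂μ ≤ 1 := by
    intro μ hμ
    calc ∫⁻ x, F x ∂μ ≤ ∫⁻ _, 1 ∂μ := by
          apply lintegral_mono
          intro x
          exact ENNReal.ofReal_le_one.mpr (hf1 x)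
      _ = 1 := by simp
  have hint_eq : ∀ s : S, ∫ x, f x ∂(P s) = (∫⁻ x, F x ∂(P s)).toReal := fun s =>
    integral_eq_lintegral_of_nonneg_ae (Filter.Eventually.of_forall hf0)
      hfmeas.aestronglyMeasurable
  have hD_eq : ∫ x, f x ∂ξ = (∫⁻ x, F x ∂ξ).toReal :=
    integral_eq_lintegral_of_nonneg_ae (Filter.Eventually.of_forall hf0)
      hfmeas.aestronglyMeasurable
  set g : S → ℝ := fun s => ∫ x, f x ∂(P s) with hgdef
  have hg0 : ∀ s, 0 ≤ g s := fun s => integral_nonneg hf0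
  have hg1 : ∀ s, g s ≤ 1 := by
    intro s
    rw [hgdef]
    simp only [hint_eq s]
    have := hlint_le_one (P s) inferInstance
    calc (∫⁻ x, F x ∂(P s)).toReal ≤ (1 : ENNReal).toReal :=
      ENNReal.toReal_mono (by simp) this
      _ = 1 := by simp
  have hgmeas : Measurable g := by
    have : Measurable fun s => (∫⁻ x, F x ∂(P s)).toReal :=
      (Measurable.lintegral_kernel hFmeas).ennreal_toReal
    simpa [hgdef, funext hint_eq] using this
  -- invariance: ∫ g dξ = ∫ f dξ
  have hinv_int : ∫ s, g s ∂ξ = ∫ x, f x ∂ξ := by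
    have hlhs : ∫ s, g s ∂ξ = (∫⁻ s, ENNReal.ofReal (g s) ∂ξ).toReal :=
      integral_eq_lintegral_of_nonneg_ae (Filter.Eventually.of_forall hg0)
        hgmeas.aestronglyMeasurable
    have hofg : ∀ s, ENNReal.ofReal (g s) = ∫⁻ x, F x ∂(P s) := by
      intro s
      rw [hgdef]
      simp only [hint_eq s]
      exact ENNReal.ofReal_toReal (by
        exact ne_of_lt (lt_of_le_of_lt (hlint_le_one (P s) inferInstance) (by simp)))
    rw [hlhs, hD_eq]
    congr 1
    simp_rw [hofg]
    rw [← Measure.lintegral_bind (P.measurable.aemeasurable) hFmeas.aemeasurable, hbind]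
  -- integrate pointwise bound
  have hintf : Integrable f ξ := integrable_of_abs_le_one _ hfmeas.aestronglyMeasurable
    (fun x => abs_le.mpr ⟨by linarith [hf0 x], hf1 x⟩)
  have hintg : Integrable g ξ := integrable_of_abs_le_one _ hgmeas.aestronglyMeasurable
    (fun x => abs_le.mpr ⟨by linarith [hg0 x], hg1 x⟩)
  have hintL : Integrable L ξ := integrable_of_abs_le_one _ hLmeas.aestronglyMeasurable
    (fun x => abs_le.mpr ⟨by linarith [hL0 x], hL1 x⟩)
  have hmono : ∫ s, f s ∂ξ ≤ ∫ s, (γ * g s + γ * L s) ∂ξ := by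
    apply integral_mono hintf ((hintg.const_mul γ).add (hintL.const_mul γ))
    intro s
    exact hpoint s
  rw [integral_add (hintg.const_mul γ) (hintL.const_mul γ),
    integral_const_mul, integral_const_mul, hinv_int] at hmono
  have hD0 : (0:ℝ) ≤ ∫ s, f s ∂ξ := integral_nonneg hf0
  have hγpos : (0:ℝ) < 1 - γ := by linarith
  rw [le_div_iff₀ hγpos]
  nlinarith [hmono, hD0]
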